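/- An O-border basis of an ideal a generates a: if G is an O-border basis of a, then the ideal generated by G equals a. -/

import Mathlib

namespace BBD

open Finsupp

variable {σ : Type*}

/-- `t'` is a child of `t`: `t' · y = t` for some variable `y`. -/
def isChild (t' t : σ →₀ ℕ) : Prop := ∃ y : σ, t' + Finsupp.single y 1 = t

/-- The set of children of a monomial `t`. -/
def children (t : σ →₀ ℕ) : Set (σ →₀ ℕ) := {t' | isChild t' t}

/-- The children of a set of monomials. -/
def childrenSet (S : Set (σ →₀ ℕ)) : Set (σ →₀ ℕ) := ⋃ s ∈ S, children s

/-- The set of parents of a monomial `t`. -/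
def parents (t : σ →₀ ℕ) : Set (σ →₀ ℕ) := {t' | isChild t t'}

/-- An order ideal: a nonempty finite set of monomials closed under divisibility. -/
def IsOrderIdeal (O : Set (σ →₀ ℕ)) : Prop :=
  O.Finite ∧ O.Nonempty ∧ ∀ t ∈ O, ∀ t', t' ≤ t → t' ∈ O

/-- The border of a set of monomials: `(T₁ · O) \ O`. -/
def borderOf (O : Set (σ →₀ ℕ)) : Set (σ →₀ ℕ) :=
  {t | t ∉ O ∧ ∃ t' ∈ O, ∃ y : σ, t = t' + Finsupp.single y 1}



/-! ### Border prebases and border bases -/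

/-- `G` is an `O`-border prebasis: there is a bijection `e` from the border of `O` to `G`
such that `e b = b - Σ α_i t_i` with the `t_i ∈ O`. -/
def IsBorderPrebasis {K : Type*} [Field K] (O : Set (σ →₀ ℕ)) (G : Set (MvPolynomial σ K)) :
    Prop :=
  ∃ e : borderOf O ≃ G, ∀ b : borderOf O,
    MvPolynomial.coeff (b : σ →₀ ℕ) (e b : MvPolynomial σ K) = 1 ∧
    ((e b : MvPolynomial σ K).support : Set (σ →₀ ℕ)) \ {(b : σ →₀ ℕ)} ⊆ O

/-- `G` is an `O`-border basis of the ideal `a`: it is an `O`-border prebasis contained in `a`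
such that the residue classes of the elements of `O` form a vector-space basis of the
quotient ring. -/
def IsBorderBasis {K : Type*} [Field K] (O : Set (σ →₀ ℕ)) (a : Ideal (MvPolynomial σ K))
    (G : Set (MvPolynomial σ K)) : Prop :=
  IsBorderPrebasis O G ∧ (∀ g ∈ G, g ∈ a) ∧
  LinearIndependent K
    (fun t : O => Ideal.Quotient.mk a (MvPolynomial.monomial (t : σ →₀ ℕ) (1 : K))) ∧
  Submodule.span K
    (Set.range fun t : O => Ideal.Quotient.mk a (MvPolynomial.monomial (t : σ →₀ ℕ) (1 : K)))
    = ⊤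


section Aux

open MvPolynomial

variable {K : Type*} [Field K]

lemma degree_add' (a b : σ →₀ ℕ) : Finsupp.degree (a + b) = Finsupp.degree a + Finsupp.degree b := by
  simp [Finsupp.degree_eq_weight_one, map_add]

lemma degree_single' (y : σ) : Finsupp.degree (Finsupp.single y (1:ℕ)) = 1 := by
  classical
  simp [Finsupp.degree_single]

noncomputable def ind (O : Set (σ →₀ ℕ)) (m : σ →₀ ℕ) : ℕ :=
  sInf {k | ∃ t ∈ O, t ≤ m ∧ Finsupp.degree (m - t) = k}

lemma ind_set_nonempty {O : Set (σ →₀ ℕ)} (h0 : (0 : σ →₀ ℕ) ∈ O) (m : σ →₀ ℕ) :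
    {k | ∃ t ∈ O, t ≤ m ∧ Finsupp.degree (m - t) = k}.Nonempty :=
  ⟨Finsupp.degree m, 0, h0, zero_le, by simp⟩

lemma ind_le {O : Set (σ →₀ ℕ)} {t m : σ →₀ ℕ} (ht : t ∈ O) (hle : t ≤ m) :
    ind O m ≤ Finsupp.degree (m - t) :=
  Nat.sInf_le ⟨t, ht, hle, rfl⟩

lemma monomial_mem_sup {O : Set (σ →₀ ℕ)} (h0 : (0 : σ →₀ ℕ) ∈ O)
    {G : Set (MvPolynomial σ K)} (hpre : IsBorderPrebasis O G) (m : σ →₀ ℕ) :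
    (MvPolynomial.monomial m (1:K)) ∈
      Submodule.span K ((fun t => MvPolynomial.monomial t (1:K)) '' O) ⊔
        (Ideal.span G).restrictScalars K := by
  classical
  obtain ⟨e, he⟩ := hpre
  generalize hn : ind O m = n
  induction n using Nat.strong_induction_on generalizing m with
  | _ n IH =>
  by_cases hm : m ∈ O
  · exact Submodule.mem_sup_left (Submodule.subset_span ⟨m, hm, rfl⟩)
  · obtain ⟨t₀, ht₀O, ht₀m, ht₀deg⟩ := Nat.sInf_mem (ind_set_nonempty h0 m)
    have hne : m - t₀ ≠ 0 := by
      intro h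
      exact hm (le_antisymm (tsub_eq_zero_iff_le.mp h) ht₀m ▸ ht₀O)
    obtain ⟨y, hy⟩ := Finsupp.support_nonempty_iff.mpr hne
    have hy' : (m - t₀) y ≠ 0 := Finsupp.mem_support_iff.mp hy
    set b := t₀ + Finsupp.single y 1 with hb
    have hsle : Finsupp.single y 1 ≤ m - t₀ :=
      Finsupp.single_le_iff.mpr (Nat.one_le_iff_ne_zero.mpr hy')
    have hbm : b ≤ m := by
      calc b ≤ t₀ + (m - t₀) := add_le_add_right hsle _
        _ = m := add_tsub_cancel_of_le ht₀m
    set r := m - b with hr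
    have hmbr : m = b + r := (add_tsub_cancel_of_le hbm).symm
    have hmt : m - t₀ = Finsupp.single y 1 + r := by
      apply add_left_cancel (a := t₀)
      rw [add_tsub_cancel_of_le ht₀m]
      rw [hmbr, hb, add_assoc]
    have hdegr : Finsupp.degree r + 1 = n := by
      have h2 : Finsupp.degree (m - t₀) = n := by rw [← hn]; exact ht₀deg
      rw [hmt, degree_add', degree_single'] at h2; omega
    have hbO : b ∉ O := by
      intro hbO'
      have h1 : ind O m ≤ Finsupp.degree (m - b) := ind_le hbO' hbm
      rw [hn, ← hr] at h1
      omega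
    have hbB : b ∈ borderOf O := ⟨hbO, t₀, ht₀O, y, rfl⟩
    set g : MvPolynomial σ K := (e ⟨b, hbB⟩ : MvPolynomial σ K) with hgdef
    have hgG : g ∈ G := (e ⟨b, hbB⟩).2
    obtain ⟨hcoeff, hsupp⟩ := he ⟨b, hbB⟩
    set q : MvPolynomial σ K := monomial b 1 - g with hqdef
    have hq_supp : ∀ v ∈ q.support, v ∈ O := by
      intro v hv
      have hvq : q.coeff v ≠ 0 := MvPolynomial.mem_support_iff.mp hv
      have hvb : v ≠ b := by
        intro h; subst h
        simp [hqdef, MvPolynomial.coeff_sub, MvPolynomial.coeff_monomial, hgdef, hcoeff] at hvq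
      have hvg : v ∈ g.support := by
        rw [MvPolynomial.mem_support_iff]
        intro h
        simp [hqdef, MvPolynomial.coeff_sub, MvPolynomial.coeff_monomial, Ne.symm hvb, h] at hvq
      exact hsupp ⟨hvg, hvb⟩
    have key : (monomial m (1:K)) =
        monomial r 1 * g + ∑ v ∈ q.support, (q.coeff v) • monomial (r + v) (1:K) := by
      have h1 : (monomial m (1:K)) = monomial r 1 * monomial b 1 := by
        rw [MvPolynomial.monomial_mul, one_mul, hmbr, add_comm]
      have h2 : (monomial b (1:K)) = g + q := by rw [hqdef]; ring
      rw [h1, h2, mul_add]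
      congr 1
      conv_lhs => rw [q.as_sum]
      rw [Finset.mul_sum]
      refine Finset.sum_congr rfl fun v hv => ?_
      rw [MvPolynomial.monomial_mul, MvPolynomial.smul_monomial]
      simp
    rw [key]
    refine add_mem (Submodule.mem_sup_right ?_) (Submodule.sum_mem _ fun v hv => ?_)
    · exact Ideal.mul_mem_left _ _ (Ideal.subset_span hgG)
    · refine Submodule.smul_mem _ _ ?_
      have hvO := hq_supp v hv
      have hlt : ind O (r + v) < n := by
        have : ind O (r + v) ≤ Finsupp.degree (r + v - v) := ind_le hvO le_add_self
        rw [add_tsub_cancel_right] at this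
        omega
      exact IH _ hlt _ rfl


lemma all_mem_sup {O : Set (σ →₀ ℕ)} (h0 : (0 : σ →₀ ℕ) ∈ O)
    {G : Set (MvPolynomial σ K)} (hpre : IsBorderPrebasis O G) (p : MvPolynomial σ K) :
    p ∈ Submodule.span K ((fun t => MvPolynomial.monomial t (1:K)) '' O) ⊔
        (Ideal.span G).restrictScalars K := by
  nth_rewrite 1 [p.as_sum]
  refine Submodule.sum_mem _ fun v _ => ?_
  have : (monomial v (p.coeff v)) = p.coeff v • monomial v (1:K) := by
    rw [MvPolynomial.smul_monomial, smul_eq_mul, mul_one]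
  rw [this]
  exact Submodule.smul_mem _ _ (monomial_mem_sup h0 hpre v)


end Aux

open MvPolynomial in
theorem borderBasis_span [Fintype σ] {K : Type*} [Field K]
    (O : Set (σ →₀ ℕ)) (hO : IsOrderIdeal O) (a : Ideal (MvPolynomial σ K))
    (G : Set (MvPolynomial σ K)) (hG : IsBorderBasis O a G) :
    Ideal.span G = a := by
  classical
  obtain ⟨hpre, hGa, hli, -⟩ := hG
  obtain ⟨-, ⟨t, htO⟩, hOdc⟩ := hO
  have h0 : (0 : σ →₀ ℕ) ∈ O := hOdc t htO 0 zero_le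
  refine le_antisymm (Ideal.span_le.mpr hGa) ?_
  intro f hf
  have hfS := all_mem_sup h0 hpre f
  rw [Submodule.mem_sup] at hfS
  obtain ⟨p, hp, g, hg, hfpg⟩ := hfS
  have hgI : g ∈ Ideal.span G := hg
  have hga : g ∈ a := Ideal.span_le.mpr hGa hgI
  have hpa : p ∈ a := by
    have : p = f - g := by rw [← hfpg]; ring
    rw [this]; exact a.sub_mem hf hga
  have hp' : p ∈ Submodule.span K (Set.range fun t : O => monomial (t : σ →₀ ℕ) (1:K)) := by
    rwa [Set.image_eq_range] at hp
  rw [Finsupp.mem_span_range_iff_exists_finsupp] at hp'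
  obtain ⟨c, hc⟩ := hp'
  set φ : MvPolynomial σ K →ₗ[K] MvPolynomial σ K ⧸ a := (Ideal.Quotient.mkₐ K a).toLinearMap
    with hφdef
  have hmkp : Ideal.Quotient.mk a p = 0 := Ideal.Quotient.eq_zero_iff_mem.mpr hpa
  have h0' : Finsupp.linearCombination K
      (fun t : O => Ideal.Quotient.mk a (monomial (t : σ →₀ ℕ) (1:K))) c = 0 := by
    rw [Finsupp.linearCombination_apply]
    have h3 := congrArg φ hc
    rw [map_finsuppSum] at h3
    simp only [map_smul, hφdef, AlgHom.toLinearMap_apply, Ideal.Quotient.mkₐ_eq_mk] at h3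
    exact h3.trans hmkp
  have hc0 : c = 0 := linearIndependent_iff.mp hli c h0'
  have hp0 : p = 0 := by rw [← hc, hc0, Finsupp.sum_zero_index]
  rw [← hfpg, hp0, zero_add]
  exact hgI


end BBD
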